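/- Let T>0 and E a separable Banach space. For each λ∈[0,1] let {A^{(λ)}(t)}_{t∈[0,T]} be a family of linear operators on E having an associated evolution system R^{(λ)}, assume {R^{(λ)}}_{λ∈[0,1]} is a continuous family of evolution systems, and assume there is ω>0 such that ‖R^{(λ)}(t,s)‖ ≤ e^{−ω(t−s)} for all 0≤s≤t≤T and λ∈[0,1]. Let F:[0,T]×E×[0,1]→E be continuous, locally Lipschitz in the second variable uniformly with respect to the other variables, of sublinear growth in the second variable uniformly with respect to the others, and satisfy β(F([0,T]×Q×[0,1]))≤kβ(Q) for every bounded Q⊂E, for some k≥0. For t∈[0,T] define Φ_t:E×[0,1]→E by Φ_t(x,λ):=u(t;0,T,x,λ), where u(·;0,T,x,λ) is the unique mild solution of u'(t)=A^{(λ)}(t)u(t)+F(t,u(t),λ), u(0)=x. Then for every bounded Q⊂E and t∈[0,T], the set Φ_t(Q×[0,1]) is bounded and β(Φ_t(Q×[0,1])) ≤ e^{(k−ω)t} β(Q). -/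

import Mathlib

open Filter Topology Set MeasureTheory

noncomputable section

variable {E : Type*} [NormedAddCommGroup E] [NormedSpace ℝ E]

/-- An evolution system `{R(t,s)}_{0 ≤ s ≤ t ≤ T}` on `E`. -/
structure IsEvolutionSystem (T : ℝ) (R : ℝ → ℝ → E →L[ℝ] E) : Prop where
  refl : ∀ t ∈ Icc (0 : ℝ) T, R t t = 1
  comp : ∀ ⦃s r t : ℝ⦄, 0 ≤ s → s ≤ r → r ≤ t → t ≤ T → R t s = (R t r).comp (R r s)
  strong_cont : ∀ x : E, ContinuousOn (fun p : ℝ × ℝ => R p.1 p.2 x)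
    {p : ℝ × ℝ | 0 ≤ p.2 ∧ p.2 ≤ p.1 ∧ p.1 ≤ T}

/-- The parameter domain `{(t,s) : 0 ≤ s ≤ t ≤ T}` of an evolution system. -/
def evolDomain (T : ℝ) : Set (ℝ × ℝ) := {p : ℝ × ℝ | 0 ≤ p.2 ∧ p.2 ≤ p.1 ∧ p.1 ≤ T}

/-- A family `{R^{(λ)}}_{λ∈[0,1]}` of evolution systems is continuous: for every `x ∈ E`
and every sequence `λₙ → λ₀` in `[0,1]`, `R^{(λₙ)}(t,s)x → R^{(λ₀)}(t,s)x` uniformly in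
`0 ≤ s ≤ t ≤ T`. -/
def IsContinuousEvolFamily (T : ℝ) (R : ℝ → ℝ → ℝ → E →L[ℝ] E) : Prop :=
  ∀ (x : E) (l : ℕ → ℝ) (l0 : ℝ), (∀ n, l n ∈ Icc (0 : ℝ) 1) → l0 ∈ Icc (0 : ℝ) 1 →
    Tendsto l atTop (𝓝 l0) →
    TendstoUniformlyOn (fun n p => R (l n) p.1 p.2 x) (fun p => R l0 p.1 p.2 x)
      atTop (evolDomain T)

/-- The map `Σ(x,w,λ)(t) = R^{(λ)}(t,0)x + ∫₀ᵗ R^{(λ)}(t,s) w(s) ds`. -/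
def evolMap (R : ℝ → ℝ → E →L[ℝ] E) (x : E) (w : ℝ → E) (t : ℝ) : E :=
  R t 0 x + ∫ s in (0 : ℝ)..t, R t s (w s)

/-- The Hausdorff measure of noncompactness of a set `Q`. -/
def hausdorffMNC (Q : Set E) : ℝ :=
  sInf {r : ℝ | 0 < r ∧ ∃ c : Finset E, Q ⊆ ⋃ y ∈ c, Metric.ball y r}

variable (T : ℝ) in
/-- `u` is a mild solution on `[0,T]` of `u' = A(t)u + g(t,u)`, `u(0) = x`, for the evolution
system `R` associated with `{A(t)}`. -/
def IsMildSolution (R : ℝ → ℝ → E →L[ℝ] E) (g : ℝ → E → E) (x : E) (u : ℝ → E) : Prop :=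
  ContinuousOn u (Icc (0 : ℝ) T) ∧
  ∀ t ∈ Icc (0 : ℝ) T, u t = R t 0 x + ∫ s in (0 : ℝ)..t, R t s (g s (u s))

/-- `F(t,x,λ)` is continuous on `[0,T] × E × [0,1]`. -/
def ParamContinuous (T : ℝ) (F : ℝ → E → ℝ → E) : Prop :=
  ContinuousOn (fun p : ℝ × E × ℝ => F p.1 p.2.1 p.2.2)
    (Icc (0 : ℝ) T ×ˢ (univ : Set E) ×ˢ Icc (0 : ℝ) 1)

/-- `F` is locally Lipschitz in the second variable, uniformly in the other variables. -/
def ParamLocallyLipschitz (T : ℝ) (F : ℝ → E → ℝ → E) : Prop :=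
  ∀ x : E, ∃ r > (0 : ℝ), ∃ Lc > (0 : ℝ), ∀ t ∈ Icc (0 : ℝ) T, ∀ lam ∈ Icc (0 : ℝ) 1,
    ∀ x₁ ∈ Metric.ball x r, ∀ x₂ ∈ Metric.ball x r,
      ‖F t x₁ lam - F t x₂ lam‖ ≤ Lc * ‖x₁ - x₂‖

/-- `F` has sublinear growth in the second variable, uniformly in the other variables. -/
def ParamSublinear (T : ℝ) (F : ℝ → E → ℝ → E) : Prop :=
  ∃ c > (0 : ℝ), ∀ t ∈ Icc (0 : ℝ) T, ∀ lam ∈ Icc (0 : ℝ) 1, ∀ x : E,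
    ‖F t x lam‖ ≤ c * (1 + ‖x‖)

/-- The image `F([0,T] × Q × [0,1])`. -/
def paramImage (T : ℝ) (F : ℝ → E → ℝ → E) (Q : Set E) : Set E :=
  {y : E | ∃ t ∈ Icc (0 : ℝ) T, ∃ x ∈ Q, ∃ lam ∈ Icc (0 : ℝ) 1, y = F t x lam}

open Pointwise
set_option linter.unusedSectionVars false

section MNC

def MNCCovered (Q : Set E) (r : ℝ) : Prop :=
  ∃ c : Finset E, Q ⊆ ⋃ y ∈ c, Metric.ball y r

lemma hausdorffMNC_def (Q : Set E) :
    hausdorffMNC Q = sInf {r : ℝ | 0 < r ∧ MNCCovered Q r} := rfl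

lemma mnc_nonneg (Q : Set E) : 0 ≤ hausdorffMNC Q :=
  Real.sInf_nonneg fun _ hr => hr.1.le

lemma MNCCovered.mono {Q : Set E} {r r' : ℝ} (h : MNCCovered Q r) (hr : r ≤ r') :
    MNCCovered Q r' := by
  obtain ⟨c, hc⟩ := h
  exact ⟨c, hc.trans (Set.iUnion₂_mono fun y _ => Metric.ball_subset_ball hr)⟩

lemma MNCCovered.anti {Q Q' : Set E} {r : ℝ} (h : MNCCovered Q r) (hQ : Q' ⊆ Q) :
    MNCCovered Q' r := by
  obtain ⟨c, hc⟩ := h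
  exact ⟨c, hQ.trans hc⟩

lemma MNCCovered.of_finite_cover {Q : Set E} {r : ℝ} {t : Set E} (ht : t.Finite)
    (h : Q ⊆ ⋃ y ∈ t, Metric.ball y r) : MNCCovered Q r := by
  refine ⟨ht.toFinset, h.trans ?_⟩
  intro x hx
  simp only [Set.mem_iUnion, exists_prop] at hx ⊢
  obtain ⟨y, hy, hxy⟩ := hx
  exact ⟨y, by simpa [Set.Finite.mem_toFinset] using hy, hxy⟩

lemma exists_covered_of_bounded {Q : Set E} (h : Bornology.IsBounded Q) :
    ∃ r > 0, MNCCovered Q r := by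
  obtain ⟨R, hR⟩ := h.subset_closedBall (0 : E)
  refine ⟨max R 0 + 1, by positivity, ⟨{0}, fun x hx => ?_⟩⟩
  have hx' : ‖x‖ ≤ R := by simpa [Metric.mem_closedBall] using hR hx
  simp only [Finset.mem_singleton, Set.mem_iUnion, exists_prop]
  refine ⟨0, rfl, ?_⟩
  simp only [Metric.mem_ball, dist_zero_right]
  calc ‖x‖ ≤ max R 0 := le_max_of_le_left hx'
  _ < max R 0 + 1 := by linarith

lemma mnc_le_of_covered {Q : Set E} {x : ℝ} (hx : 0 ≤ x)
    (h : ∀ ε > 0, MNCCovered Q (x + ε)) : hausdorffMNC Q ≤ x := by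
  refine le_of_forall_pos_le_add fun ε hε => ?_
  exact csInf_le ⟨0, fun r hr => hr.1.le⟩ ⟨by linarith, h ε hε⟩

lemma covered_of_mnc_lt {Q : Set E} (hQ : Bornology.IsBounded Q) {r : ℝ}
    (h : hausdorffMNC Q < r) : MNCCovered Q r := by
  obtain ⟨R, hR0, hRc⟩ := exists_covered_of_bounded hQ
  have hne : {r' : ℝ | 0 < r' ∧ MNCCovered Q r'}.Nonempty := ⟨R, hR0, hRc⟩
  obtain ⟨r', hr', hlt⟩ := exists_lt_of_csInf_lt hne h
  exact hr'.2.mono hlt.le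

lemma mnc_mono {A B : Set E} (hAB : A ⊆ B) (hB : Bornology.IsBounded B) :
    hausdorffMNC A ≤ hausdorffMNC B :=
  mnc_le_of_covered (mnc_nonneg B) fun ε hε =>
    (covered_of_mnc_lt hB (by linarith)).anti hAB

lemma mnc_closedBall_le {δ : ℝ} (hδ : 0 ≤ δ) (z : E) :
    hausdorffMNC (Metric.closedBall z δ) ≤ δ := by
  refine mnc_le_of_covered hδ fun ε hε => ⟨{z}, fun x hx => ?_⟩
  simp only [Finset.mem_singleton, Set.mem_iUnion, exists_prop]
  refine ⟨z, rfl, ?_⟩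
  simp only [Metric.mem_closedBall] at hx
  simp only [Metric.mem_ball]
  linarith

lemma mnc_le_add_of_decomp {A W Z : Set E} (hW : Bornology.IsBounded W)
    (hZ : Bornology.IsBounded Z) (h : ∀ a ∈ A, ∃ w ∈ W, ∃ z ∈ Z, a = w + z) :
    hausdorffMNC A ≤ hausdorffMNC W + hausdorffMNC Z := by
  refine mnc_le_of_covered (add_nonneg (mnc_nonneg W) (mnc_nonneg Z)) fun ε hε => ?_
  obtain ⟨cw, hcw⟩ := covered_of_mnc_lt hW (lt_add_of_pos_right _ (half_pos hε))
  obtain ⟨cz, hcz⟩ := covered_of_mnc_lt hZ (lt_add_of_pos_right _ (half_pos hε))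
  classical
  refine ⟨(cw ×ˢ cz).image fun p => p.1 + p.2, fun a ha => ?_⟩
  obtain ⟨w, hw, z, hz, rfl⟩ := h a ha
  obtain ⟨yw, hyw, hbw⟩ := by simpa only [Set.mem_iUnion, exists_prop] using hcw hw
  obtain ⟨yz, hyz, hbz⟩ := by simpa only [Set.mem_iUnion, exists_prop] using hcz hz
  simp only [Set.mem_iUnion, exists_prop, Finset.mem_image, Finset.mem_product]
  refine ⟨yw + yz, ⟨⟨yw, yz⟩, ⟨hyw, hyz⟩, rfl⟩, ?_⟩
  simp only [Metric.mem_ball] at hbw hbz ⊢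
  calc dist (w + z) (yw + yz) ≤ dist w yw + dist z yz := dist_add_add_le _ _ _ _
  _ < (hausdorffMNC W + ε / 2) + (hausdorffMNC Z + ε / 2) := by linarith
  _ = hausdorffMNC W + hausdorffMNC Z + ε := by ring

lemma mnc_smul_le {S : Set E} (hS : Bornology.IsBounded S) {h : ℝ} (hh : 0 < h) :
    hausdorffMNC (h • S) ≤ h * hausdorffMNC S := by
  refine mnc_le_of_covered (mul_nonneg hh.le (mnc_nonneg S)) fun ε hε => ?_
  obtain ⟨c, hc⟩ := covered_of_mnc_lt hS
    (lt_add_of_pos_right _ (div_pos hε hh) : hausdorffMNC S < hausdorffMNC S + ε / h)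
  classical
  refine ⟨c.image fun y => h • y, ?_⟩
  rintro _ ⟨s, hs, rfl⟩
  obtain ⟨y, hy, hby⟩ := by simpa only [Set.mem_iUnion, exists_prop] using hc hs
  simp only [Set.mem_iUnion, exists_prop, Finset.mem_image]
  refine ⟨h • y, ⟨y, hy, rfl⟩, ?_⟩
  simp only [Metric.mem_ball] at hby ⊢
  rw [dist_smul₀]
  calc ‖h‖ * dist s y < h * (hausdorffMNC S + ε / h) := by
        rw [Real.norm_of_nonneg hh.le]
        exact mul_lt_mul_of_pos_left hby hh
  _ = h * hausdorffMNC S + ε := by field_simp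

lemma mnc_family_le {ι : Type*} {P : Set ι} (G : ι → E →L[ℝ] E) {m : ℝ} (hm0 : 0 ≤ m)
    (hm : ∀ p ∈ P, ‖G p‖ ≤ m)
    (horb : ∀ y : E, TotallyBounded {w : E | ∃ p ∈ P, w = G p y})
    {A B : Set E} (hB : Bornology.IsBounded B)
    (hA : ∀ w ∈ A, ∃ p ∈ P, ∃ b ∈ B, w = G p b) :
    hausdorffMNC A ≤ m * hausdorffMNC B := by
  classical
  refine mnc_le_of_covered (mul_nonneg hm0 (mnc_nonneg B)) fun ε hε => ?_
  have hε' : 0 < ε / (m + 1) := by positivity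
  obtain ⟨c, hc⟩ := covered_of_mnc_lt hB
    (lt_add_of_pos_right _ hε' : hausdorffMNC B < hausdorffMNC B + ε / (m + 1))
  -- for each center y, a finite (ε/(m+1))-net of the orbit of y
  have hnet : ∀ y : E, ∃ t : Finset E,
      {w : E | ∃ p ∈ P, w = G p y} ⊆ ⋃ z ∈ t, Metric.ball z (ε / (m + 1)) := by
    intro y
    obtain ⟨t, ht, hsub⟩ := Metric.totallyBounded_iff.mp (horb y) _ hε'
    exact ⟨ht.toFinset, by simpa [Set.Finite.mem_toFinset] using hsub⟩
  choose net hnet using hnet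
  refine ⟨c.biUnion net, fun w hw => ?_⟩
  obtain ⟨p, hp, b, hb, rfl⟩ := hA w hw
  obtain ⟨y, hy, hby⟩ := by simpa only [Set.mem_iUnion, exists_prop] using hc hb
  have horbmem : G p y ∈ {w : E | ∃ p' ∈ P, w = G p' y} := ⟨p, hp, rfl⟩
  obtain ⟨z, hz, hgz⟩ := by simpa only [Set.mem_iUnion, exists_prop] using hnet y horbmem
  simp only [Set.mem_iUnion, exists_prop, Finset.mem_biUnion]
  refine ⟨z, ⟨y, hy, hz⟩, ?_⟩
  simp only [Metric.mem_ball] at hby hgz ⊢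
  have h1 : dist (G p b) (G p y) ≤ m * (hausdorffMNC B + ε / (m + 1)) := by
    calc dist (G p b) (G p y) = ‖G p (b - y)‖ := by rw [dist_eq_norm, ← map_sub]
    _ ≤ ‖G p‖ * ‖b - y‖ := (G p).le_opNorm _
    _ ≤ m * (hausdorffMNC B + ε / (m + 1)) := by
        apply mul_le_mul (hm p hp) _ (norm_nonneg _) hm0
        rw [← dist_eq_norm]; exact hby.le
  calc dist (G p b) z ≤ dist (G p b) (G p y) + dist (G p y) z := dist_triangle _ _ _
  _ < m * (hausdorffMNC B + ε / (m + 1)) + ε / (m + 1) := by linarith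
  _ = m * hausdorffMNC B + (m + 1) * (ε / (m + 1)) := by ring
  _ = m * hausdorffMNC B + ε := by rw [mul_div_cancel₀]; linarith

lemma mnc_closure_convexHull_le {D : Set E} (hD : Bornology.IsBounded D) :
    hausdorffMNC (closure (convexHull ℝ D)) ≤ hausdorffMNC D := by
  classical
  refine mnc_le_of_covered (mnc_nonneg D) fun ε hε => ?_
  have hε3 : 0 < ε / 3 := by positivity
  obtain ⟨c, hc⟩ := covered_of_mnc_lt hD
    (lt_add_of_pos_right _ hε3 : hausdorffMNC D < hausdorffMNC D + ε / 3)
  set r := hausdorffMNC D + ε / 3 with hr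
  have hr0 : 0 ≤ r := by have := mnc_nonneg D; simp only [hr]; linarith
  set C : Set E := convexHull ℝ (↑c : Set E) + Metric.closedBall (0 : E) r with hC
  have hCconv : Convex ℝ C := (convex_convexHull ℝ _).add (convex_closedBall _ _)
  have hCcompact : IsCompact (convexHull ℝ (↑c : Set E)) :=
    c.finite_toSet.isCompact_convexHull (𝕜 := ℝ)
  have hCclosed : IsClosed C :=
    (Metric.isClosed_closedBall).add_left_of_isCompact hCcompact
  have hDC : D ⊆ C := by
    intro x hx
    obtain ⟨y, hy, hxy⟩ := by simpa only [Set.mem_iUnion, exists_prop] using hc hx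
    refine ⟨y, subset_convexHull ℝ _ hy, x - y, ?_, by show y + (x - y) = x; rw [add_comm, sub_add_cancel]⟩
    simp only [Metric.mem_closedBall, dist_zero_right, ← dist_eq_norm]
    exact hxy.le
  have hcchC : closure (convexHull ℝ D) ⊆ C :=
    closure_minimal (convexHull_min hDC hCconv) hCclosed
  obtain ⟨t, ht, hsub⟩ := Metric.totallyBounded_iff.mp hCcompact.totallyBounded _ hε3
  refine MNCCovered.of_finite_cover ht (hcchC.trans fun x hx => ?_)
  obtain ⟨p, hp, q, hq, rfl⟩ := hx
  obtain ⟨z, hz, hpz⟩ := by simpa only [Set.mem_iUnion, exists_prop] using hsub hp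
  simp only [Set.mem_iUnion, exists_prop]
  refine ⟨z, hz, ?_⟩
  simp only [Metric.mem_ball] at hpz ⊢
  simp only [Metric.mem_closedBall, dist_zero_right] at hq
  calc dist (p + q) z ≤ dist (p + q) p + dist p z := dist_triangle _ _ _
  _ = ‖q‖ + dist p z := by rw [dist_eq_norm, add_sub_cancel_left]
  _ < r + ε / 3 := add_lt_add_of_le_of_lt hq hpz
  _ ≤ hausdorffMNC D + ε := by simp only [hr]; linarith

end MNC

section Anal

open Pointwise
set_option linter.unusedSectionVars false


lemma isCompact_evolDomain (T : ℝ) : IsCompact (evolDomain T) := by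
  have hcl : IsClosed (evolDomain T) := by
    have h1 : IsClosed {p : ℝ × ℝ | 0 ≤ p.2} := isClosed_le continuous_const continuous_snd
    have h2 : IsClosed {p : ℝ × ℝ | p.2 ≤ p.1} := isClosed_le continuous_snd continuous_fst
    have h3 : IsClosed {p : ℝ × ℝ | p.1 ≤ T} := isClosed_le continuous_fst continuous_const
    exact h1.inter (h2.inter h3)
  refine (isCompact_Icc.prod isCompact_Icc :
      IsCompact (Icc (0:ℝ) T ×ˢ Icc (0:ℝ) T)).of_isClosed_subset hcl ?_
  rintro ⟨t, s⟩ ⟨h1, h2, h3⟩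
  exact ⟨⟨h1.trans h2, h3⟩, ⟨h1, h2.trans h3⟩⟩

lemma evol_orbit_totallyBounded {T : ℝ} {R : ℝ → ℝ → ℝ → E →L[ℝ] E}
    (hES : ∀ lam ∈ Icc (0 : ℝ) 1, IsEvolutionSystem T (R lam))
    (hcont : IsContinuousEvolFamily T R) (x : E) :
    TotallyBounded
      {w : E | ∃ lam ∈ Icc (0:ℝ) 1, ∃ p ∈ evolDomain T, w = R lam p.1 p.2 x} := by
  apply IsSeqCompact.totallyBounded
  intro w hw
  choose lam hlam p hp hwp using hw
  have hK : IsCompact ((Icc (0:ℝ) 1) ×ˢ evolDomain T) :=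
    isCompact_Icc.prod (isCompact_evolDomain T)
  obtain ⟨⟨l0, p0⟩, hq0, φ, hφ, hqt⟩ := hK.tendsto_subseq
    (x := fun n => (lam n, p n)) (fun n => ⟨hlam n, hp n⟩)
  obtain ⟨hl0, hp0⟩ := hq0
  have hlt : Tendsto (fun n => lam (φ n)) atTop (𝓝 l0) :=
    (continuous_fst.tendsto _).comp hqt
  have hpt : Tendsto (fun n => p (φ n)) atTop (𝓝 p0) :=
    (continuous_snd.tendsto _).comp hqt
  refine ⟨R l0 p0.1 p0.2 x, ⟨l0, hl0, p0, hp0, rfl⟩, φ, hφ, ?_⟩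
  -- b n := R l0 (p (φ n)) x tends to the limit
  have hb : Tendsto (fun n => R l0 (p (φ n)).1 (p (φ n)).2 x) atTop
      (𝓝 (R l0 p0.1 p0.2 x)) := by
    have hsc := (hES l0 hl0).strong_cont x p0 hp0
    have hwithin : Tendsto (fun n => p (φ n)) atTop (𝓝[evolDomain T] p0) :=
      tendsto_nhdsWithin_iff.2 ⟨hpt, Eventually.of_forall fun n => hp (φ n)⟩
    exact hsc.tendsto.comp hwithin
  -- difference tends to zero
  have hdiff : Tendsto (fun n => ‖(w ∘ φ) n - R l0 (p (φ n)).1 (p (φ n)).2 x‖)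
      atTop (𝓝 0) := by
    have hU := hcont x (fun n => lam (φ n)) l0 (fun n => hlam (φ n)) hl0 hlt
    rw [Metric.tendstoUniformlyOn_iff] at hU
    rw [Metric.tendsto_atTop]
    intro ε hε
    obtain ⟨N, hN⟩ := (hU ε hε).exists_forall_of_atTop
    refine ⟨N, fun n hn => ?_⟩
    have := hN n hn (p (φ n)) (hp (φ n))
    simp only [Function.comp, hwp (φ n)]
    rw [Real.dist_eq, sub_zero]
    rw [dist_comm, dist_eq_norm] at this
    simpa [abs_of_nonneg (norm_nonneg _)] using this
  rw [tendsto_iff_norm_sub_tendsto_zero]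
  have : Tendsto (fun n => ‖(w ∘ φ) n - R l0 (p (φ n)).1 (p (φ n)).2 x‖
      + ‖R l0 (p (φ n)).1 (p (φ n)).2 x - R l0 p0.1 p0.2 x‖) atTop (𝓝 (0 + 0)) :=
    hdiff.add ((tendsto_iff_norm_sub_tendsto_zero).1 hb)
  rw [add_zero] at this
  refine squeeze_zero (fun n => norm_nonneg _) (fun n => ?_) this
  calc ‖(w ∘ φ) n - R l0 p0.1 p0.2 x‖
      ≤ ‖(w ∘ φ) n - R l0 (p (φ n)).1 (p (φ n)).2 x‖
        + ‖R l0 (p (φ n)).1 (p (φ n)).2 x - R l0 p0.1 p0.2 x‖ := by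
        have := norm_sub_le_norm_sub_add_norm_sub ((w ∘ φ) n)
          (R l0 (p (φ n)).1 (p (φ n)).2 x) (R l0 p0.1 p0.2 x)
        exact this
  _ = _ := rfl

lemma integrand_continuousOn {T : ℝ} {R0 : ℝ → ℝ → E →L[ℝ] E}
    (hsc : ∀ x : E, ContinuousOn (fun p : ℝ × ℝ => R0 p.1 p.2 x) (evolDomain T))
    (hb1 : ∀ s t : ℝ, 0 ≤ s → s ≤ t → t ≤ T → ‖R0 t s‖ ≤ 1)
    {w : ℝ → E} {t' : ℝ} (ht'T : t' ≤ T)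
    (hw : ContinuousOn w (Icc 0 t')) :
    ContinuousOn (fun s => R0 t' s (w s)) (Icc (0:ℝ) t') := by
  intro s₀ hs₀
  have hWc : ContinuousWithinAt w (Icc 0 t') s₀ := hw s₀ hs₀
  have hmap : MapsTo (fun s : ℝ => ((t' : ℝ), s)) (Icc 0 t') (evolDomain T) :=
    fun s hs => ⟨hs.1, hs.2, ht'T⟩
  have hH : ContinuousWithinAt (fun s => R0 t' s (w s₀)) (Icc 0 t') s₀ :=
    ((hsc (w s₀)) _ (hmap hs₀)).comp
      ((continuous_const.prodMk continuous_id).continuousWithinAt) hmap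
  rw [ContinuousWithinAt, tendsto_iff_norm_sub_tendsto_zero]
  have hlim : Tendsto (fun s => ‖w s - w s₀‖ + ‖R0 t' s (w s₀) - R0 t' s₀ (w s₀)‖)
      (𝓝[Icc (0:ℝ) t'] s₀) (𝓝 (0 + 0)) :=
    ((tendsto_iff_norm_sub_tendsto_zero).1 hWc).add
      ((tendsto_iff_norm_sub_tendsto_zero).1 hH)
  rw [add_zero] at hlim
  refine squeeze_zero' (Eventually.of_forall fun s => norm_nonneg _) ?_ hlim
  filter_upwards [eventually_mem_nhdsWithin] with s hs
  calc ‖R0 t' s (w s) - R0 t' s₀ (w s₀)‖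
      ≤ ‖R0 t' s (w s) - R0 t' s (w s₀)‖ + ‖R0 t' s (w s₀) - R0 t' s₀ (w s₀)‖ :=
        norm_sub_le_norm_sub_add_norm_sub _ _ _
  _ ≤ ‖w s - w s₀‖ + ‖R0 t' s (w s₀) - R0 t' s₀ (w s₀)‖ := by
      have h1 : ‖R0 t' s (w s) - R0 t' s (w s₀)‖ ≤ ‖w s - w s₀‖ := by
        rw [← map_sub]
        calc ‖R0 t' s (w s - w s₀)‖ ≤ ‖R0 t' s‖ * ‖w s - w s₀‖ := (R0 t' s).le_opNorm _
        _ ≤ 1 * ‖w s - w s₀‖ :=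
            mul_le_mul_of_nonneg_right (hb1 s t' hs.1 hs.2 ht'T) (norm_nonneg _)
        _ = ‖w s - w s₀‖ := one_mul _
      linarith

variable [CompleteSpace E]

lemma mild_split {T : ℝ} {R0 : ℝ → ℝ → E →L[ℝ] E} (hES0 : IsEvolutionSystem T R0)
    (hb1 : ∀ s t : ℝ, 0 ≤ s → s ≤ t → t ≤ T → ‖R0 t s‖ ≤ 1)
    {g : ℝ → E → E} {x : E} {u : ℝ → E} (hu : IsMildSolution T R0 g x u)
    (hgc : ContinuousOn (fun s => g s (u s)) (Icc 0 T))
    {τ t' : ℝ} (hτ : 0 ≤ τ) (hττ' : τ ≤ t') (ht' : t' ≤ T) :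
    u t' = R0 t' τ (u τ) + ∫ s in τ..t', R0 t' s (g s (u s)) := by
  set w : ℝ → E := fun s => g s (u s) with hwdef
  have ht'0 : 0 ≤ t' := hτ.trans hττ'
  have hwc : ContinuousOn w (Icc 0 t') := hgc.mono (Icc_subset_Icc le_rfl ht')
  have hc1 : ContinuousOn (fun s => R0 t' s (w s)) (Icc 0 t') :=
    integrand_continuousOn hES0.strong_cont hb1 ht' hwc
  have hc2 : ContinuousOn (fun s => R0 τ s (w s)) (Icc 0 τ) :=
    integrand_continuousOn hES0.strong_cont hb1 (hττ'.trans ht')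
      (hwc.mono (Icc_subset_Icc le_rfl hττ'))
  have I1 : IntervalIntegrable (fun s => R0 t' s (w s)) MeasureTheory.volume 0 τ :=
    (hc1.mono (by rw [Set.uIcc_of_le hτ]; exact Icc_subset_Icc le_rfl hττ')).intervalIntegrable
  have I2 : IntervalIntegrable (fun s => R0 t' s (w s)) MeasureTheory.volume τ t' :=
    (hc1.mono (by rw [Set.uIcc_of_le hττ']; exact Icc_subset_Icc hτ le_rfl)).intervalIntegrable
  have I3 : IntervalIntegrable (fun s => R0 τ s (w s)) MeasureTheory.volume 0 τ :=
    (hc2.mono (by rw [Set.uIcc_of_le hτ])).intervalIntegrable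
  have e1 := hu.2 t' ⟨ht'0, ht'⟩
  have esplit : (∫ s in (0:ℝ)..τ, R0 t' s (w s)) + (∫ s in τ..t', R0 t' s (w s))
      = ∫ s in (0:ℝ)..t', R0 t' s (w s) :=
    intervalIntegral.integral_add_adjacent_intervals I1 I2
  have e2 : (∫ s in (0:ℝ)..τ, R0 t' s (w s)) = R0 t' τ (∫ s in (0:ℝ)..τ, R0 τ s (w s)) := by
    rw [← (R0 t' τ).intervalIntegral_comp_comm I3]
    apply intervalIntegral.integral_congr
    intro s hs
    rw [Set.uIcc_of_le hτ] at hs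
    have hcomp := hES0.comp hs.1 hs.2 hττ' ht'
    show (R0 t' s) (w s) = (R0 t' τ) ((R0 τ s) (w s))
    rw [hcomp]; rfl
  have e3 : R0 t' 0 x = R0 t' τ (R0 τ 0 x) := by
    rw [hES0.comp le_rfl hτ hττ' ht']; rfl
  calc u t' = R0 t' 0 x + ∫ s in (0:ℝ)..t', R0 t' s (w s) := e1
  _ = R0 t' τ (R0 τ 0 x) + ((∫ s in (0:ℝ)..τ, R0 t' s (w s))
        + (∫ s in τ..t', R0 t' s (w s))) := by rw [e3, esplit]
  _ = R0 t' τ (R0 τ 0 x) + (R0 t' τ (∫ s in (0:ℝ)..τ, R0 τ s (w s))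
        + (∫ s in τ..t', R0 t' s (w s))) := by rw [e2]
  _ = R0 t' τ (R0 τ 0 x + ∫ s in (0:ℝ)..τ, R0 τ s (w s))
        + (∫ s in τ..t', R0 t' s (w s)) := by rw [map_add]; abel
  _ = R0 t' τ (u τ) + ∫ s in τ..t', R0 t' s (w s) := by
      rw [← hu.2 τ ⟨hτ, hττ'.trans ht'⟩]

lemma mild_norm_bound {T : ℝ} (hT : 0 < T) {R0 : ℝ → ℝ → E →L[ℝ] E}
    (hb1 : ∀ s t : ℝ, 0 ≤ s → s ≤ t → t ≤ T → ‖R0 t s‖ ≤ 1)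
    {g : ℝ → E → E} {x : E} {u : ℝ → E} (hu : IsMildSolution T R0 g x u)
    (hsc : ∀ y : E, ContinuousOn (fun p : ℝ × ℝ => R0 p.1 p.2 y) (evolDomain T))
    (hgc : ContinuousOn (fun s => g s (u s)) (Icc 0 T))
    {c : ℝ} (hc : 0 < c) (hgb : ∀ s ∈ Icc (0:ℝ) T, ‖g s (u s)‖ ≤ c * (1 + ‖u s‖)) :
    ∀ t ∈ Icc (0:ℝ) T, ‖u t‖ ≤ (‖x‖ + c * T) * Real.exp (c * T) := by
  set cl : ℝ → ℝ := fun s => max 0 (min s T) with hcl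
  have hclcont : Continuous cl := continuous_const.max (continuous_id.min continuous_const)
  have hclmem : ∀ s, cl s ∈ Icc (0:ℝ) T :=
    fun s => ⟨le_max_left _ _, max_le hT.le (min_le_right _ _)⟩
  have hcleq : ∀ s ∈ Icc (0:ℝ) T, cl s = s := by
    intro s hs
    simp only [hcl]
    rw [min_eq_left hs.2, max_eq_right hs.1]
  have hucont : Continuous (fun s => u (cl s)) := hu.1.comp_continuous hclcont hclmem
  set n : ℝ → ℝ := fun s => ‖u (cl s)‖ with hn
  have hncont : Continuous n := hucont.norm
  have hnn : ∀ s, 0 ≤ n s := fun s => norm_nonneg _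
  set G : ℝ → ℝ := fun t => ∫ s in (0:ℝ)..t, n s with hG
  have hGderiv : ∀ t : ℝ, HasDerivAt G (n t) t :=
    fun t => (hncont.integral_hasStrictDerivAt 0 t).hasDerivAt
  have hGcont : Continuous G :=
    continuous_iff_continuousAt.2 fun t => (hGderiv t).continuousAt
  have hGnn : ∀ t, 0 ≤ t → 0 ≤ G t := fun t ht =>
    intervalIntegral.integral_nonneg ht fun s _ => hnn s
  set ε : ℝ := ‖x‖ + c * T with hε
  have hε0 : 0 ≤ ε := by positivity
  -- pointwise bound
  have hpt : ∀ t ∈ Icc (0:ℝ) T, ‖u t‖ ≤ ε + c * G t := by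
    intro t htm
    have e1 := hu.2 t htm
    have hInt : ContinuousOn (fun s => R0 t s (g s (u s))) (Icc 0 t) :=
      integrand_continuousOn hsc hb1 htm.2 (hgc.mono (Icc_subset_Icc le_rfl htm.2))
    have h1 : ‖R0 t 0 x‖ ≤ ‖x‖ := by
      calc ‖R0 t 0 x‖ ≤ ‖R0 t 0‖ * ‖x‖ := (R0 t 0).le_opNorm _
      _ ≤ 1 * ‖x‖ := mul_le_mul_of_nonneg_right (hb1 0 t le_rfl htm.1 htm.2) (norm_nonneg _)
      _ = ‖x‖ := one_mul _
    have h2 : ‖∫ s in (0:ℝ)..t, R0 t s (g s (u s))‖ ≤ c * t + c * G t := by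
      calc ‖∫ s in (0:ℝ)..t, R0 t s (g s (u s))‖
          ≤ ∫ s in (0:ℝ)..t, ‖R0 t s (g s (u s))‖ :=
            intervalIntegral.norm_integral_le_integral_norm htm.1
      _ ≤ ∫ s in (0:ℝ)..t, (c + c * n s) := by
          apply intervalIntegral.integral_mono_on htm.1
          · exact (hInt.norm.mono (by rw [Set.uIcc_of_le htm.1])).intervalIntegrable |>.mono_set
              (by rw [Set.uIcc_of_le htm.1])
          · exact (continuous_const.add (continuous_const.mul hncont)).intervalIntegrable _ _
          · intro s hs
            have hsT : s ∈ Icc (0:ℝ) T := ⟨hs.1, hs.2.trans htm.2⟩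
            calc ‖R0 t s (g s (u s))‖ ≤ ‖R0 t s‖ * ‖g s (u s)‖ := (R0 t s).le_opNorm _
            _ ≤ 1 * ‖g s (u s)‖ :=
                mul_le_mul_of_nonneg_right (hb1 s t hs.1 hs.2 htm.2) (norm_nonneg _)
            _ = ‖g s (u s)‖ := one_mul _
            _ ≤ c * (1 + ‖u s‖) := hgb s hsT
            _ = c + c * n s := by rw [hn]; simp only; rw [hcleq s hsT]; ring
      _ = c * t + c * G t := by
          rw [intervalIntegral.integral_add (g := fun s => c * n s) (intervalIntegrable_const)
            ((continuous_const.mul hncont).intervalIntegrable _ _),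
            intervalIntegral.integral_const, intervalIntegral.integral_const_mul]
          simp [hG]; ring
    calc ‖u t‖ ≤ ‖R0 t 0 x‖ + ‖∫ s in (0:ℝ)..t, R0 t s (g s (u s))‖ := by
          rw [e1]; exact norm_add_le _ _
    _ ≤ ‖x‖ + (c * t + c * G t) := add_le_add h1 h2
    _ ≤ ε + c * G t := by
        rw [hε]
        have : c * t ≤ c * T := mul_le_mul_of_nonneg_left htm.2 hc.le
        linarith
  -- Gronwall
  have hgron : ∀ t ∈ Icc (0:ℝ) T, ‖G t‖ ≤ gronwallBound 0 c ε (t - 0) := by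
    apply norm_le_gronwallBound_of_norm_deriv_right_le hGcont.continuousOn
      (fun t _ => (hGderiv t).hasDerivWithinAt)
    · simp only [hG]
      rw [intervalIntegral.integral_same]
      simp
    · intro t htm
      have htm' : t ∈ Icc (0:ℝ) T := ⟨htm.1, htm.2.le⟩
      rw [Real.norm_of_nonneg (hnn t), Real.norm_of_nonneg (hGnn t htm.1)]
      have : n t = ‖u t‖ := by rw [hn]; simp only; rw [hcleq t htm']
      rw [this, mul_comm]
      exact (hpt t htm').trans (by linarith [le_refl (c * G t)])
  intro t htm
  have hb : G t ≤ ε / c * (Real.exp (c * t) - 1) := by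
    have := hgron t htm
    rw [Real.norm_of_nonneg (hGnn t htm.1), gronwallBound_of_K_ne_0 hc.ne'] at this
    simpa using this
  calc ‖u t‖ ≤ ε + c * G t := hpt t htm
  _ ≤ ε + c * (ε / c * (Real.exp (c * t) - 1)) :=
      add_le_add_right (mul_le_mul_of_nonneg_left hb hc.le) _
  _ = ε * Real.exp (c * t) := by field_simp; ring
  _ ≤ ε * Real.exp (c * T) := by
      apply mul_le_mul_of_nonneg_left _ hε0
      exact Real.exp_le_exp.2 (mul_le_mul_of_nonneg_left htm.2 hc.le)

lemma integral_mem_smul_cch {f : ℝ → E} {a b : ℝ} (hab : a < b)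
    (hf : ContinuousOn f (Icc a b)) (D : Set E) (hfD : ∀ s ∈ Ioc a b, f s ∈ D) :
    (∫ s in a..b, f s) ∈ (b - a) • closure (convexHull ℝ D) := by
  have hint : IntegrableOn f (Ioc a b) volume :=
    (hf.integrableOn_Icc).mono_set Ioc_subset_Icc_self
  have h0 : volume (Ioc a b) ≠ 0 := by
    rw [Real.volume_Ioc]
    simp only [ne_eq, ENNReal.ofReal_eq_zero, not_le]
    linarith
  have htop : volume (Ioc a b) ≠ ⊤ := by
    rw [Real.volume_Ioc]; exact ENNReal.ofReal_ne_top
  have havg : (⨍ s in Ioc a b, f s) ∈ closure (convexHull ℝ D) := by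
    refine Convex.set_average_mem ((convex_convexHull ℝ D).closure) isClosed_closure h0 htop
      (ae_restrict_of_forall_mem measurableSet_Ioc fun s hs =>
        subset_closure (subset_convexHull ℝ D (hfD s hs))) hint
  have heq : (∫ s in a..b, f s) = (b - a) • ⨍ s in Ioc a b, f s := by
    rw [intervalIntegral.integral_of_le hab.le, setAverage_eq, smul_smul,
      Real.volume_real_Ioc_of_le hab.le]
    rw [mul_inv_cancel₀ (by linarith : b - a ≠ 0), one_smul]
  rw [heq]
  exact Set.smul_mem_smul_set havg

end Anal

set_option maxHeartbeats 1000000 in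
/-- Proposition 3(iii), Compactness: if moreover
`‖R^{(λ)}(t,s)‖ ≤ e^{−ω(t−s)}`, then for every bounded `Q ⊆ E` and `t ∈ [0,T]`, the set
`Φ_t(Q × [0,1])` of values at time `t` of the mild solutions is bounded and satisfies
`β(Φ_t(Q × [0,1])) ≤ e^{(k−ω)t} β(Q)`. -/
theorem statement_8
    {E : Type*} [NormedAddCommGroup E] [NormedSpace ℝ E] [CompleteSpace E]
    [TopologicalSpace.SeparableSpace E]
    (T : ℝ) (hT : 0 < T)
    (R : ℝ → ℝ → ℝ → E →L[ℝ] E)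
    (hES : ∀ lam ∈ Icc (0 : ℝ) 1, IsEvolutionSystem T (R lam))
    (hcont : IsContinuousEvolFamily T R)
    (ω : ℝ) (hω : 0 < ω)
    (hbound : ∀ lam ∈ Icc (0 : ℝ) 1, ∀ s t : ℝ, 0 ≤ s → s ≤ t → t ≤ T →
      ‖R lam t s‖ ≤ Real.exp (-ω * (t - s)))
    (F : ℝ → E → ℝ → E)
    (hFc : ParamContinuous T F)
    (hFlip : ParamLocallyLipschitz T F)
    (hFsub : ParamSublinear T F)
    (k : ℝ) (hk : 0 ≤ k)
    (hFk : ∀ Q : Set E, Bornology.IsBounded Q →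
      hausdorffMNC (paramImage T F Q) ≤ k * hausdorffMNC Q)
    (Q : Set E) (hQ : Bornology.IsBounded Q) (t : ℝ) (ht : t ∈ Icc (0 : ℝ) T) :
    Bornology.IsBounded {y : E | ∃ x ∈ Q, ∃ lam ∈ Icc (0 : ℝ) 1, ∃ u : ℝ → E,
        IsMildSolution T (R lam) (fun s z => F s z lam) x u ∧ y = u t} ∧
    hausdorffMNC {y : E | ∃ x ∈ Q, ∃ lam ∈ Icc (0 : ℝ) 1, ∃ u : ℝ → E,
        IsMildSolution T (R lam) (fun s z => F s z lam) x u ∧ y = u t} ≤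
      Real.exp ((k - ω) * t) * hausdorffMNC Q := by
  classical
  obtain ⟨c, hc, hFsubc⟩ := hFsub
  obtain ⟨ht0, htT⟩ := ht
  -- operator norms are at most 1
  have hb1 : ∀ lam ∈ Icc (0:ℝ) 1, ∀ s t' : ℝ, 0 ≤ s → s ≤ t' → t' ≤ T →
      ‖R lam t' s‖ ≤ 1 := by
    intro lam hlam s t' h1 h2 h3
    refine (hbound lam hlam s t' h1 h2 h3).trans ?_
    rw [Real.exp_le_one_iff]
    nlinarith
  -- a uniform bound on the initial data
  obtain ⟨CQ0, hCQ0⟩ := hQ.subset_closedBall 0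
  set CQ : ℝ := max CQ0 0 with hCQdef
  have hCQnn : 0 ≤ CQ := le_max_right _ _
  have hCQ : ∀ x ∈ Q, ‖x‖ ≤ CQ := fun x hx =>
    le_max_of_le_left (by simpa [Metric.mem_closedBall, dist_zero_right] using hCQ0 hx)
  set M : ℝ := (CQ + c * T) * Real.exp (c * T) with hMdef
  have hM0 : 0 ≤ M := by positivity
  -- the family of sets of solution values
  set Φ : ℝ → Set E := fun τ => {y : E | ∃ x ∈ Q, ∃ lam ∈ Icc (0 : ℝ) 1, ∃ u : ℝ → E,
      IsMildSolution T (R lam) (fun s z => F s z lam) x u ∧ y = u τ} with hΦdef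
  -- facts about an individual mild solution
  have hfacts : ∀ lam ∈ Icc (0:ℝ) 1, ∀ x ∈ Q, ∀ u : ℝ → E,
      IsMildSolution T (R lam) (fun s z => F s z lam) x u →
      ContinuousOn (fun s => F s (u s) lam) (Icc 0 T) ∧
      (∀ s ∈ Icc (0:ℝ) T, ‖u s‖ ≤ M) := by
    intro lam hlam x hx u hu
    have hwcont : ContinuousOn (fun s => F s (u s) lam) (Icc 0 T) := by
      have hmap : MapsTo (fun s : ℝ => (s, u s, lam)) (Icc 0 T)
          (Icc (0 : ℝ) T ×ˢ (univ : Set E) ×ˢ Icc (0 : ℝ) 1) :=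
        fun s hs => ⟨hs, mem_univ _, hlam⟩
      exact hFc.comp (continuousOn_id.prodMk (hu.1.prodMk continuousOn_const)) hmap
    refine ⟨hwcont, fun s hs => ?_⟩
    have := mild_norm_bound hT (hb1 lam hlam) hu (hES lam hlam).strong_cont hwcont hc
      (fun s' hs' => hFsubc s' hs' lam hlam (u s')) s hs
    refine this.trans ?_
    rw [hMdef]
    have h1 : ‖x‖ + c * T ≤ CQ + c * T := by linarith [hCQ x hx]
    exact mul_le_mul_of_nonneg_right h1 (Real.exp_pos _).le
  -- each Φ τ is contained in the ball of radius M
  have hΦM : ∀ τ ∈ Icc (0:ℝ) T, Φ τ ⊆ Metric.closedBall (0 : E) M := by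
    rintro τ hτ y ⟨x, hx, lam, hlam, u, hu, rfl⟩
    simpa [Metric.mem_closedBall, dist_zero_right] using (hfacts lam hlam x hx u hu).2 τ hτ
  have hΦbdd : ∀ τ ∈ Icc (0:ℝ) T, Bornology.IsBounded (Φ τ) :=
    fun τ hτ => (Metric.isBounded_closedBall).subset (hΦM τ hτ)
  -- at time zero the solutions take their initial values
  have hΦ0 : Φ 0 ⊆ Q := by
    rintro y ⟨x, hx, lam, hlam, u, hu, rfl⟩
    have h := hu.2 0 ⟨le_rfl, hT.le⟩
    rw [(hES lam hlam).refl 0 ⟨le_rfl, hT.le⟩, intervalIntegral.integral_same, add_zero,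
      ContinuousLinearMap.one_apply] at h
    rwa [h]
  -- total boundedness of the orbits
  have horbit : ∀ y : E, TotallyBounded
      {w : E | ∃ lam ∈ Icc (0:ℝ) 1, ∃ p ∈ evolDomain T, w = R lam p.1 p.2 y} :=
    evol_orbit_totallyBounded hES hcont
  set K₀ : ℝ := k * c * (1 + M) with hK₀def
  have hK₀0 : 0 ≤ K₀ := by positivity
  -- the key one-step estimate
  have key : ∀ τ τ' : ℝ, 0 ≤ τ → τ < τ' → τ' ≤ T →
      hausdorffMNC (Φ τ') ≤ (Real.exp (-ω * (τ' - τ)) + k * (τ' - τ)) * hausdorffMNC (Φ τ)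
        + (τ' - τ)^2 * K₀ := by
    intro τ τ' hτ0 hττ' hτ'T
    set h : ℝ := τ' - τ with hhdef
    have hh : 0 < h := by simp only [hhdef]; linarith
    have hτT : τ ≤ T := by linarith
    have hΦτbdd : Bornology.IsBounded (Φ τ) := hΦbdd τ ⟨hτ0, hτT⟩
    -- the union of the values on [τ, τ']
    set U : Set E := {y : E | ∃ σ ∈ Icc τ τ', y ∈ Φ σ} with hUdef
    have hUM : U ⊆ Metric.closedBall (0:E) M := by
      rintro y ⟨σ, hσ, hy⟩
      exact hΦM σ ⟨hτ0.trans hσ.1, hσ.2.trans hτ'T⟩ hy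
    have hUbdd : Bornology.IsBounded U := (Metric.isBounded_closedBall).subset hUM
    set PF : Set E := paramImage T F U with hPFdef
    have hPFM : PF ⊆ Metric.closedBall (0:E) (c * (1 + M)) := by
      rintro y ⟨t1, ht1, x1, hx1, lam1, hlam1, rfl⟩
      have h1 : ‖x1‖ ≤ M := by
        simpa [Metric.mem_closedBall, dist_zero_right] using hUM hx1
      simp only [Metric.mem_closedBall, dist_zero_right]
      calc ‖F t1 x1 lam1‖ ≤ c * (1 + ‖x1‖) := hFsubc t1 ht1 lam1 hlam1 x1
      _ ≤ c * (1 + M) := by nlinarith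
    have hPFbdd : Bornology.IsBounded PF := (Metric.isBounded_closedBall).subset hPFM
    set D : Set E := {w : E | ∃ p ∈ (Icc (0:ℝ) 1 ×ˢ Icc τ τ'),
        ∃ b ∈ PF, w = R p.1 τ' p.2 b} with hDdef
    have hDM : D ⊆ Metric.closedBall (0:E) (c * (1 + M)) := by
      rintro w ⟨⟨lam1, s1⟩, ⟨hlam1, hs1⟩, b, hb, rfl⟩
      have hbM : ‖b‖ ≤ c * (1 + M) := by
        simpa [Metric.mem_closedBall, dist_zero_right] using hPFM hb
      simp only [Metric.mem_closedBall, dist_zero_right]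
      calc ‖R lam1 τ' s1 b‖ ≤ ‖R lam1 τ' s1‖ * ‖b‖ := (R lam1 τ' s1).le_opNorm _
      _ ≤ 1 * ‖b‖ := mul_le_mul_of_nonneg_right
          (hb1 lam1 hlam1 s1 τ' (hτ0.trans hs1.1) hs1.2 hτ'T) (norm_nonneg _)
      _ = ‖b‖ := one_mul _
      _ ≤ c * (1 + M) := hbM
    have hDbdd : Bornology.IsBounded D := (Metric.isBounded_closedBall).subset hDM
    -- β D ≤ k β U
    have hDβ : hausdorffMNC D ≤ 1 * hausdorffMNC PF := by
      refine mnc_family_le (P := Icc (0:ℝ) 1 ×ˢ Icc τ τ')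
        (fun p : ℝ × ℝ => R p.1 τ' p.2) zero_le_one ?_ ?_ hPFbdd ?_
      · rintro ⟨lam1, s1⟩ ⟨hlam1, hs1⟩
        exact hb1 lam1 hlam1 s1 τ' (hτ0.trans hs1.1) hs1.2 hτ'T
      · intro y
        refine (horbit y).subset ?_
        rintro w ⟨⟨lam1, s1⟩, ⟨hlam1, hs1⟩, rfl⟩
        exact ⟨lam1, hlam1, (τ', s1), ⟨hτ0.trans hs1.1, hs1.2, hτ'T⟩, rfl⟩
      · rintro w ⟨p, hp, b, hb, rfl⟩
        exact ⟨p, hp, b, hb, rfl⟩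
    have hPFβ : hausdorffMNC PF ≤ k * hausdorffMNC U := hFk U hUbdd
    -- β U ≤ β (Φ τ) + h c (1+M)
    have hUβ : hausdorffMNC U ≤ hausdorffMNC (Φ τ) + h * (c * (1 + M)) := by
      set W2 : Set E := {w : E | ∃ p ∈ (Icc (0:ℝ) 1 ×ˢ Icc τ τ'),
          ∃ b ∈ Φ τ, w = R p.1 p.2 τ b} with hW2def
      have hW2bdd : Bornology.IsBounded W2 := by
        refine (Metric.isBounded_closedBall (x := (0:E)) (r := M)).subset ?_
        rintro w ⟨⟨lam1, σ1⟩, ⟨hlam1, hσ1⟩, b, hb, rfl⟩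
        have hbM : ‖b‖ ≤ M := by
          simpa [Metric.mem_closedBall, dist_zero_right] using hΦM τ ⟨hτ0, hτT⟩ hb
        simp only [Metric.mem_closedBall, dist_zero_right]
        calc ‖R lam1 σ1 τ b‖ ≤ ‖R lam1 σ1 τ‖ * ‖b‖ := (R lam1 σ1 τ).le_opNorm _
        _ ≤ 1 * ‖b‖ := mul_le_mul_of_nonneg_right
            (hb1 lam1 hlam1 τ σ1 hτ0 hσ1.1 (hσ1.2.trans hτ'T)) (norm_nonneg _)
        _ = ‖b‖ := one_mul _
        _ ≤ M := hbM
      have hdecomp : ∀ y ∈ U, ∃ w ∈ W2, ∃ z ∈ Metric.closedBall (0:E) (h * (c * (1+M))),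
          y = w + z := by
        rintro y ⟨σ, hσ, x, hx, lam, hlam, u, hu, rfl⟩
        have hσT : σ ≤ T := hσ.2.trans hτ'T
        obtain ⟨hwcont, huM⟩ := hfacts lam hlam x hx u hu
        have hsplit := mild_split (hES lam hlam) (hb1 lam hlam) hu hwcont hτ0 hσ.1 hσT
        refine ⟨R lam σ τ (u τ), ⟨(lam, σ), ⟨hlam, hσ⟩, u τ,
          ⟨x, hx, lam, hlam, u, hu, rfl⟩, rfl⟩,
          ∫ s in τ..σ, R lam σ s (F s (u s) lam), ?_, hsplit⟩
        simp only [Metric.mem_closedBall, dist_zero_right]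
        have hnb : ∀ s ∈ Set.uIoc τ σ, ‖R lam σ s (F s (u s) lam)‖ ≤ c * (1 + M) := by
          intro s hs
          rw [Set.uIoc_of_le hσ.1] at hs
          have hs0T : s ∈ Icc (0:ℝ) T := ⟨hτ0.trans hs.1.le, hs.2.trans hσT⟩
          calc ‖R lam σ s (F s (u s) lam)‖ ≤ ‖R lam σ s‖ * ‖F s (u s) lam‖ :=
                (R lam σ s).le_opNorm _
          _ ≤ 1 * ‖F s (u s) lam‖ := mul_le_mul_of_nonneg_right
              (hb1 lam hlam s σ hs0T.1 hs.2 hσT) (norm_nonneg _)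
          _ = ‖F s (u s) lam‖ := one_mul _
          _ ≤ c * (1 + ‖u s‖) := hFsubc s hs0T lam hlam (u s)
          _ ≤ c * (1 + M) := by nlinarith [huM s hs0T]
        calc ‖∫ s in τ..σ, R lam σ s (F s (u s) lam)‖ ≤ c * (1 + M) * |σ - τ| :=
              intervalIntegral.norm_integral_le_of_norm_le_const hnb
        _ ≤ h * (c * (1 + M)) := by
            rw [abs_of_nonneg (by linarith [hσ.1] : (0:ℝ) ≤ σ - τ)]
            have hστh : σ - τ ≤ h := by simp only [hhdef]; linarith [hσ.2]
            calc c * (1 + M) * (σ - τ) ≤ c * (1 + M) * h :=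
                mul_le_mul_of_nonneg_left hστh (by positivity)
            _ = h * (c * (1 + M)) := by ring
      have hW2β : hausdorffMNC W2 ≤ 1 * hausdorffMNC (Φ τ) := by
        refine mnc_family_le (P := Icc (0:ℝ) 1 ×ˢ Icc τ τ')
          (fun p : ℝ × ℝ => R p.1 p.2 τ) zero_le_one ?_ ?_ hΦτbdd ?_
        · rintro ⟨lam1, σ1⟩ ⟨hlam1, hσ1⟩
          exact hb1 lam1 hlam1 τ σ1 hτ0 hσ1.1 (hσ1.2.trans hτ'T)
        · intro y
          refine (horbit y).subset ?_
          rintro w ⟨⟨lam1, σ1⟩, ⟨hlam1, hσ1⟩, rfl⟩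
          exact ⟨lam1, hlam1, (σ1, τ), ⟨hτ0, hσ1.1, hσ1.2.trans hτ'T⟩, rfl⟩
        · rintro w ⟨p, hp, b, hb, rfl⟩
          exact ⟨p, hp, b, hb, rfl⟩
      have := mnc_le_add_of_decomp hW2bdd (Metric.isBounded_closedBall) hdecomp
      have hball := mnc_closedBall_le (by positivity : (0:ℝ) ≤ h * (c * (1+M))) (0:E)
      linarith [one_mul (hausdorffMNC (Φ τ)) ▸ hW2β]
    -- decomposition of Φ τ'
    set W1 : Set E := {w : E | ∃ lam ∈ Icc (0:ℝ) 1, ∃ b ∈ Φ τ, w = R lam τ' τ b} with hW1def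
    have hW1bdd : Bornology.IsBounded W1 := by
      refine (Metric.isBounded_closedBall (x := (0:E)) (r := M)).subset ?_
      rintro w ⟨lam1, hlam1, b, hb, rfl⟩
      have hbM : ‖b‖ ≤ M := by
        simpa [Metric.mem_closedBall, dist_zero_right] using hΦM τ ⟨hτ0, hτT⟩ hb
      simp only [Metric.mem_closedBall, dist_zero_right]
      calc ‖R lam1 τ' τ b‖ ≤ ‖R lam1 τ' τ‖ * ‖b‖ := (R lam1 τ' τ).le_opNorm _
      _ ≤ 1 * ‖b‖ := mul_le_mul_of_nonneg_right
          (hb1 lam1 hlam1 τ τ' hτ0 hττ'.le hτ'T) (norm_nonneg _)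
      _ = ‖b‖ := one_mul _
      _ ≤ M := hbM
    set Z1 : Set E := h • closure (convexHull ℝ D) with hZ1def
    have hcchM : closure (convexHull ℝ D) ⊆ Metric.closedBall (0:E) (c * (1+M)) :=
      closure_minimal (convexHull_min hDM (convex_closedBall _ _)) Metric.isClosed_closedBall
    have hZ1bdd : Bornology.IsBounded Z1 := by
      refine (Metric.isBounded_closedBall (x := (0:E)) (r := h * (c * (1+M)))).subset ?_
      rintro _ ⟨z, hz, rfl⟩
      have := hcchM hz
      simp only [Metric.mem_closedBall, dist_zero_right] at this ⊢
      rw [norm_smul, Real.norm_of_nonneg hh.le]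
      nlinarith
    have hdecomp' : ∀ y ∈ Φ τ', ∃ w ∈ W1, ∃ z ∈ Z1, y = w + z := by
      rintro y ⟨x, hx, lam, hlam, u, hu, rfl⟩
      obtain ⟨hwcont, huM⟩ := hfacts lam hlam x hx u hu
      have hsplit := mild_split (hES lam hlam) (hb1 lam hlam) hu hwcont hτ0 hττ'.le hτ'T
      refine ⟨R lam τ' τ (u τ), ⟨lam, hlam, u τ, ⟨x, hx, lam, hlam, u, hu, rfl⟩, rfl⟩,
        ∫ s in τ..τ', R lam τ' s (F s (u s) lam), ?_, hsplit⟩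
      rw [hZ1def, hhdef]
      refine integral_mem_smul_cch hττ' ?_ D ?_
      · exact (integrand_continuousOn (hES lam hlam).strong_cont (hb1 lam hlam) hτ'T
          (hwcont.mono (Icc_subset_Icc le_rfl hτ'T))).mono (Icc_subset_Icc hτ0 le_rfl)
      · intro s hs
        have hs' : s ∈ Icc τ τ' := ⟨hs.1.le, hs.2⟩
        have hs0T : s ∈ Icc (0:ℝ) T := ⟨hτ0.trans hs'.1, hs'.2.trans hτ'T⟩
        exact ⟨(lam, s), ⟨hlam, hs'⟩, F s (u s) lam,
          ⟨s, hs0T, u s, ⟨s, hs', x, hx, lam, hlam, u, hu, rfl⟩, lam, hlam, rfl⟩, rfl⟩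
    have hW1β : hausdorffMNC W1 ≤ Real.exp (-ω * (τ' - τ)) * hausdorffMNC (Φ τ) := by
      refine mnc_family_le (P := Icc (0:ℝ) 1) (fun lam : ℝ => R lam τ' τ)
        (Real.exp_pos _).le ?_ ?_ hΦτbdd ?_
      · intro lam1 hlam1
        exact hbound lam1 hlam1 τ τ' hτ0 hττ'.le hτ'T
      · intro y
        refine (horbit y).subset ?_
        rintro w ⟨lam1, hlam1, rfl⟩
        exact ⟨lam1, hlam1, (τ', τ), ⟨hτ0, hττ'.le, hτ'T⟩, rfl⟩
      · rintro w ⟨lam1, hlam1, b, hb, rfl⟩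
        exact ⟨lam1, hlam1, b, hb, rfl⟩
    have hZ1β : hausdorffMNC Z1 ≤ h * hausdorffMNC D := by
      have h1 : hausdorffMNC Z1 ≤ h * hausdorffMNC (closure (convexHull ℝ D)) :=
        mnc_smul_le ((Metric.isBounded_closedBall).subset hcchM) hh
      have h2 := mnc_closure_convexHull_le hDbdd
      nlinarith
    have hfinal := mnc_le_add_of_decomp hW1bdd hZ1bdd hdecomp'
    have hβτnn := mnc_nonneg (Φ τ)
    have hc1M : (0:ℝ) ≤ c * (1 + M) := by positivity
    have hchain : hausdorffMNC Z1 ≤ h * (k * (hausdorffMNC (Φ τ) + h * (c * (1+M)))) := by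
      have : hausdorffMNC D ≤ k * (hausdorffMNC (Φ τ) + h * (c * (1+M))) := by
        have h3 : hausdorffMNC D ≤ k * hausdorffMNC U := by linarith
        have h4 : k * hausdorffMNC U ≤ k * (hausdorffMNC (Φ τ) + h * (c * (1+M))) :=
          mul_le_mul_of_nonneg_left hUβ hk
        linarith
      nlinarith [mnc_nonneg D, mnc_nonneg Z1]
    calc hausdorffMNC (Φ τ') ≤ hausdorffMNC W1 + hausdorffMNC Z1 := hfinal
    _ ≤ Real.exp (-ω * (τ' - τ)) * hausdorffMNC (Φ τ)
        + h * (k * (hausdorffMNC (Φ τ) + h * (c * (1+M)))) := add_le_add hW1β hchain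
    _ = (Real.exp (-ω * (τ' - τ)) + k * (τ' - τ)) * hausdorffMNC (Φ τ)
        + (τ' - τ)^2 * K₀ := by simp only [hhdef, hK₀def]; ring
  -- the set in the statement is Φ t
  have hgoalset : {y : E | ∃ x ∈ Q, ∃ lam ∈ Icc (0 : ℝ) 1, ∃ u : ℝ → E,
      IsMildSolution T (R lam) (fun s z => F s z lam) x u ∧ y = u t} = Φ t := rfl
  rw [hgoalset]
  refine ⟨(Metric.isBounded_closedBall).subset (hΦM t ⟨ht0, htT⟩), ?_⟩
  rcases eq_or_lt_of_le ht0 with h0 | htpos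
  · -- t = 0
    rw [← h0]
    have h1 : hausdorffMNC (Φ 0) ≤ hausdorffMNC Q := mnc_mono hΦ0 hQ
    simpa using h1
  · -- t > 0 : iterate the key estimate
    have hβQnn := mnc_nonneg Q
    have hstep : ∀ n : ℕ, 1 ≤ n → hausdorffMNC (Φ t) ≤
        Real.exp (k * t * Real.exp (ω * t / n) - ω * t) * hausdorffMNC Q
          + t^2 / n * K₀ * Real.exp (k * t) := by
      intro n hn
      have hn0 : (0:ℝ) < n := by exact_mod_cast hn
      set h : ℝ := t / n with hhdef
      have hh : 0 < h := div_pos htpos hn0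
      have hnh : (n:ℝ) * h = t := by rw [hhdef]; field_simp
      set q : ℝ := Real.exp (-ω * h) + k * h with hqdef
      have hq0 : 0 ≤ q := by positivity
      have hqle : q ≤ Real.exp (k * h) := by
        have h1 : Real.exp (-ω * h) ≤ 1 := by
          rw [Real.exp_le_one_iff]; nlinarith
        have h2 : k * h + 1 ≤ Real.exp (k * h) := Real.add_one_le_exp _
        linarith
      have claim : ∀ j : ℕ, j ≤ n → hausdorffMNC (Φ ((j:ℝ) * h)) ≤
          q^j * hausdorffMNC Q + (j:ℝ) * (h^2 * K₀) * Real.exp (k * h * j) := by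
        intro j
        induction j with
        | zero =>
          intro _
          have h1 : hausdorffMNC (Φ ((0:ℕ) * h)) ≤ hausdorffMNC Q := by
            push_cast
            rw [zero_mul]
            exact mnc_mono hΦ0 hQ
          push_cast
          simpa using h1
        | succ j ih =>
          intro hjn
          have hjn' : j ≤ n := Nat.le_of_succ_le hjn
          have prev := ih hjn'
          have hτ0 : (0:ℝ) ≤ (j:ℝ) * h := by positivity
          have hττ' : (j:ℝ) * h < ((j+1:ℕ):ℝ) * h := by
            push_cast
            nlinarith
          have hτ'T : ((j+1:ℕ):ℝ) * h ≤ T := by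
            have h1 : ((j+1:ℕ):ℝ) ≤ (n:ℝ) := by exact_mod_cast hjn
            have h2 : ((j+1:ℕ):ℝ) * h ≤ (n:ℝ) * h := mul_le_mul_of_nonneg_right h1 hh.le
            rw [hnh] at h2
            linarith
          have hkey := key ((j:ℝ) * h) (((j+1:ℕ):ℝ) * h) hτ0 hττ' hτ'T
          have hd : ((j+1:ℕ):ℝ) * h - (j:ℝ) * h = h := by push_cast; ring
          rw [hd] at hkey
          have hmid : q * hausdorffMNC (Φ ((j:ℝ) * h)) + h^2 * K₀ ≤
              q^(j+1) * hausdorffMNC Q + ((j+1:ℕ):ℝ) * (h^2 * K₀) * Real.exp (k * h * (j+1:ℕ)) := by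
            have e1 : Real.exp (k * h * j) * Real.exp (k * h) = Real.exp (k * h * ((j:ℝ)+1)) := by
              rw [← Real.exp_add]; ring_nf
            have h2 : q * hausdorffMNC (Φ ((j:ℝ) * h)) ≤
                q * (q^j * hausdorffMNC Q + (j:ℝ) * (h^2 * K₀) * Real.exp (k * h * j)) :=
              mul_le_mul_of_nonneg_left prev hq0
            have h3 : q * ((j:ℝ) * (h^2 * K₀) * Real.exp (k * h * j)) ≤
                Real.exp (k * h) * ((j:ℝ) * (h^2 * K₀) * Real.exp (k * h * j)) :=
              mul_le_mul_of_nonneg_right hqle (by positivity)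
            have h4 : (1:ℝ) ≤ Real.exp (k * h * ((j:ℝ)+1)) :=
              Real.one_le_exp (by positivity)
            have h5 : q * q^j = q^(j+1) := by rw [pow_succ]; ring
            have h6 : Real.exp (k * h) * ((j:ℝ) * (h^2 * K₀) * Real.exp (k * h * j))
                = (j:ℝ) * (h^2 * K₀) * Real.exp (k * h * ((j:ℝ)+1)) := by
              rw [← e1]; ring
            have h7 : h^2 * K₀ ≤ h^2 * K₀ * Real.exp (k * h * ((j:ℝ)+1)) :=
              le_mul_of_one_le_right (by positivity) h4
            push_cast
            nlinarith [mul_nonneg (mul_nonneg (Nat.cast_nonneg j : (0:ℝ) ≤ j)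
              (by positivity : (0:ℝ) ≤ h^2 * K₀)) (Real.exp_pos (k * h * j)).le]
          calc hausdorffMNC (Φ (((j+1:ℕ):ℝ) * h)) ≤
              (Real.exp (-ω * h) + k * h) * hausdorffMNC (Φ ((j:ℝ) * h)) + h^2 * K₀ := by
                simpa using hkey
          _ = q * hausdorffMNC (Φ ((j:ℝ) * h)) + h^2 * K₀ := by rw [hqdef]
          _ ≤ _ := hmid
      have hfin := claim n le_rfl
      rw [hnh] at hfin
      -- bound q^n
      have hqmul : q = Real.exp (-ω * h) * (1 + k * h * Real.exp (ω * h)) := by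
        rw [hqdef, mul_add, mul_one, ← mul_assoc]
        congr 1
        rw [mul_comm (Real.exp (-ω * h)), mul_assoc, ← Real.exp_add]
        simp
      have hqbound : q ≤ Real.exp (k * h * Real.exp (ω * h) - ω * h) := by
        have e2 : Real.exp (k * h * Real.exp (ω * h) - ω * h)
            = Real.exp (-ω * h) * Real.exp (k * h * Real.exp (ω * h)) := by
          rw [← Real.exp_add]; ring_nf
        rw [hqmul, e2]
        apply mul_le_mul_of_nonneg_left _ (Real.exp_pos _).le
        linarith [Real.add_one_le_exp (k * h * Real.exp (ω * h))]
      have hqn : q^n ≤ Real.exp (k * t * Real.exp (ω * t / n) - ω * t) := by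
        calc q^n ≤ (Real.exp (k * h * Real.exp (ω * h) - ω * h))^n :=
              pow_le_pow_left₀ hq0 hqbound n
        _ = Real.exp ((n:ℝ) * (k * h * Real.exp (ω * h) - ω * h)) := by
            rw [← Real.exp_nat_mul]
        _ = Real.exp (k * t * Real.exp (ω * t / n) - ω * t) := by
            congr 1
            have e3 : ω * (t / (n:ℝ)) = ω * t / n := by ring
            rw [hhdef, e3]
            field_simp
      have hterm : (n:ℝ) * (h^2 * K₀) * Real.exp (k * h * (n:ℝ))
          = t^2 / n * K₀ * Real.exp (k * t) := by
        have h1 : k * h * (n:ℝ) = k * t := by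
          rw [mul_assoc, mul_comm h (n:ℝ), hnh]
        have h2 : (n:ℝ) * h^2 = t^2 / n := by
          rw [hhdef]; field_simp
        rw [h1]
        calc (n:ℝ) * (h^2 * K₀) * Real.exp (k * t)
            = ((n:ℝ) * h^2) * K₀ * Real.exp (k * t) := by ring
        _ = t^2 / n * K₀ * Real.exp (k * t) := by rw [h2]
      rw [hterm] at hfin
      exact hfin.trans (add_le_add_left (mul_le_mul_of_nonneg_right hqn hβQnn) _)
    have h1 : Tendsto (fun n : ℕ => ω * t / n) atTop (𝓝 0) :=
      tendsto_const_div_atTop_nhds_zero_nat _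
    have h2 : Tendsto (fun n : ℕ => Real.exp (ω * t / n)) atTop (𝓝 1) := by
      have := (Real.continuous_exp.tendsto 0).comp h1
      rwa [Real.exp_zero] at this
    have h3 : Tendsto (fun n : ℕ => k * t * Real.exp (ω * t / n) - ω * t) atTop
        (𝓝 (k * t * 1 - ω * t)) := (tendsto_const_nhds.mul h2).sub tendsto_const_nhds
    have h4 : Tendsto (fun n : ℕ => Real.exp (k * t * Real.exp (ω * t / n) - ω * t)
        * hausdorffMNC Q) atTop (𝓝 (Real.exp (k * t * 1 - ω * t) * hausdorffMNC Q)) :=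
      ((Real.continuous_exp.tendsto _).comp h3).mul_const _
    have h5 : Tendsto (fun n : ℕ => t^2 / n * K₀ * Real.exp (k * t)) atTop (𝓝 0) := by
      have := ((tendsto_const_div_atTop_nhds_zero_nat (t^2)).mul_const K₀).mul_const
        (Real.exp (k * t))
      simpa using this
    have h6 : Tendsto (fun n : ℕ => Real.exp (k * t * Real.exp (ω * t / n) - ω * t)
        * hausdorffMNC Q + t^2 / n * K₀ * Real.exp (k * t)) atTop
        (𝓝 (Real.exp (k * t * 1 - ω * t) * hausdorffMNC Q + 0)) := h4.add h5
    have h7 : hausdorffMNC (Φ t) ≤ Real.exp (k * t * 1 - ω * t) * hausdorffMNC Q + 0 :=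
      ge_of_tendsto h6 (Filter.eventually_atTop.2 ⟨1, fun n hn => hstep n hn⟩)
    have h8 : k * t * 1 - ω * t = (k - ω) * t := by ring
    rwa [h8, add_zero] at h7
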